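/- Let T be a tree containing a subdivided edge with 7 vertices. Then T is not an integral tree; that is, at least one eigenvalue of the adjacency matrix of T is irrational or non-integral. -/

import Mathlib

open Polynomial Matrix

section Aux

private lemma int_sextic_nonneg (t u : ℝ) (h : ∃ z : ℤ, t = (z : ℝ)) (hu : 0 ≤ u) :
    0 ≤ t ^ 6 * u - 5 * (t ^ 4 * u) + 4 * (t ^ 2 * u) := by
  obtain ⟨z, rfl⟩ := h
  have hcase : z ≤ -2 ∨ z = -1 ∨ z = 0 ∨ z = 1 ∨ 2 ≤ z := by omega
  rcases hcase with h | h | h | h | h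
  · have hz : (z : ℝ) ≤ -2 := by exact_mod_cast h
    have h4 : 4 ≤ (z : ℝ) ^ 2 := by nlinarith
    have h1 : 0 ≤ (z : ℝ) ^ 2 - 1 := by nlinarith
    have h2 : 0 ≤ (z : ℝ) ^ 2 - 4 := by nlinarith
    nlinarith [mul_nonneg (mul_nonneg hu (sq_nonneg (z : ℝ))) (mul_nonneg h1 h2)]
  · subst h; push_cast; ring_nf; nlinarith
  · subst h; push_cast; ring_nf; nlinarith
  · subst h; push_cast; ring_nf; nlinarith
  · have hz : (2 : ℝ) ≤ (z : ℝ) := by exact_mod_cast h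
    have h4 : 4 ≤ (z : ℝ) ^ 2 := by nlinarith
    have h1 : 0 ≤ (z : ℝ) ^ 2 - 1 := by nlinarith
    have h2 : 0 ≤ (z : ℝ) ^ 2 - 4 := by nlinarith
    nlinarith [mul_nonneg (mul_nonneg hu (sq_nonneg (z : ℝ))) (mul_nonneg h1 h2)]

private lemma charpoly_eval_eigenvalue {V : Type*} [Fintype V] [DecidableEq V]
    (A : Matrix V V ℝ) (hA : A.IsHermitian) (i : V) :
    (A.charpoly).eval (hA.eigenvalues i) = 0 := by
  have h1 : (A.charpoly).eval (hA.eigenvalues i)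
      = (eval (Matrix.scalar V (hA.eigenvalues i)) (X - C A)).det := by
    rw [Matrix.charpoly, eval_det, Matrix.matPolyEquiv_charmatrix]
  rw [h1, eval_sub, eval_X, eval_C, ← Matrix.exists_mulVec_eq_zero_iff]
  refine ⟨⇑(hA.eigenvectorBasis i), ?_, ?_⟩
  · have h2 := hA.eigenvectorBasis.orthonormal.ne_zero i
    intro hc
    apply h2
    ext j
    exact congrFun hc j
  · rw [Matrix.sub_mulVec, hA.mulVec_eigenvectorBasis]
    ext j
    simp [Matrix.scalar, Matrix.mulVec_diagonal]

private lemma star_eq_transpose_real {V : Type*} [Fintype V] [DecidableEq V]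
    (M : Matrix V V ℝ) : star M = Mᵀ := by
  ext i j
  simp [Matrix.star_apply]

end Aux

/-- A tree containing a subdivided edge with `7` vertices (a path of `7`
vertices whose `5` internal vertices have degree `2` in the tree) is not an
integral tree: some eigenvalue of its adjacency matrix is not an integer. -/
theorem subdivided_edge_seven_not_integral {V : Type*} [Fintype V] [DecidableEq V]
    (G : SimpleGraph V) [DecidableRel G.Adj] (hT : G.IsTree)
    (v : Fin 7 → V) (hinj : Function.Injective v)
    (hadj : ∀ i : Fin 6, G.Adj (v i.castSucc) (v i.succ))
    (hdeg : ∀ i : Fin 7, 0 < i.1 → i.1 < 6 → G.degree (v i) = 2) :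
    ∃ θ : ℝ, ((G.adjMatrix ℝ).charpoly).eval θ = 0 ∧ ∀ z : ℤ, θ ≠ (z : ℝ) := by
  by_contra hcon
  push_neg at hcon
  -- hcon : ∀ θ, eval θ charpoly = 0 → ∃ z, θ = z
  set A : Matrix V V ℝ := G.adjMatrix ℝ with hAdef
  have hA : A.IsHermitian := by
    ext i j
    simp [hAdef, Matrix.conjTranspose_apply, G.adj_comm]
  have hint : ∀ i : V, ∃ z : ℤ, hA.eigenvalues i = (z : ℝ) := by
    intro i
    exact hcon _ (charpoly_eval_eigenvalue A hA i)
  -- spectral decomposition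
  set U : Matrix V V ℝ := (hA.eigenvectorUnitary : Matrix V V ℝ) with hUdef
  have hU1 : star U * U = 1 := hA.eigenvectorUnitary.2.1
  have hU2 : U * star U = 1 := hA.eigenvectorUnitary.2.2
  have hspec : A = U * Matrix.diagonal hA.eigenvalues * star U := by
    have := hA.spectral_theorem
    simpa using this
  have hpow : ∀ k : ℕ, A ^ k = U * Matrix.diagonal (fun i => hA.eigenvalues i ^ k) * star U := by
    intro k
    have key : ∀ (N M : Matrix V V ℝ),
        (U * N * star U) * (U * M * star U) = U * (N * M) * star U := by
      intro N M
      simp only [mul_assoc]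
      rw [← mul_assoc (star U) U (M * star U), hU1, one_mul]
    induction k with
    | zero =>
      have h1 : (fun i : V => hA.eigenvalues i ^ 0) = fun _ : V => (1 : ℝ) := by
        funext i; simp
      rw [pow_zero, h1]
      have h2 : Matrix.diagonal (fun _ : V => (1 : ℝ)) = 1 := by
        ext i j; by_cases h : i = j <;> simp [Matrix.one_apply, h]
      rw [h2, Matrix.mul_one, hU2]
    | succ k ih =>
      rw [pow_succ, ih]
      calc (U * Matrix.diagonal (fun i => hA.eigenvalues i ^ k) * star U) * A
          = (U * Matrix.diagonal (fun i => hA.eigenvalues i ^ k) * star U)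
            * (U * Matrix.diagonal hA.eigenvalues * star U) := by rw [← hspec]
        _ = U * (Matrix.diagonal (fun i => hA.eigenvalues i ^ k)
            * Matrix.diagonal hA.eigenvalues) * star U := key _ _
        _ = U * Matrix.diagonal (fun i => hA.eigenvalues i ^ (k + 1)) * star U := by
            rw [Matrix.diagonal_mul_diagonal]
            have hd : (fun i => hA.eigenvalues i ^ k * hA.eigenvalues i)
                = fun i => hA.eigenvalues i ^ (k + 1) := by
              funext i
              simp [pow_succ]
            rw [hd]
  set e : V → ℝ := Pi.single (v 3) 1 with hedef
  set y : V → ℝ := star U *ᵥ e with hydef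
  have hmom : ∀ k : ℕ, e ⬝ᵥ (A ^ k *ᵥ e) = ∑ i, hA.eigenvalues i ^ k * (y i * y i) := by
    intro k
    rw [hpow k, ← Matrix.mulVec_mulVec, ← Matrix.mulVec_mulVec, Matrix.dotProduct_mulVec]
    have hy : e ᵥ* U = y := by
      rw [hydef, star_eq_transpose_real, Matrix.mulVec_transpose]
    rw [hy]
    simp only [dotProduct, Matrix.mulVec_diagonal]
    exact Finset.sum_congr rfl (fun i _ => by ring)
  -- spectral lower bound
  have hlow : 0 ≤ e ⬝ᵥ (A ^ 6 *ᵥ e) - 5 * (e ⬝ᵥ (A ^ 4 *ᵥ e)) + 4 * (e ⬝ᵥ (A ^ 2 *ᵥ e)) := by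
    rw [hmom 6, hmom 4, hmom 2, Finset.mul_sum, Finset.mul_sum,
      ← Finset.sum_sub_distrib, ← Finset.sum_add_distrib]
    apply Finset.sum_nonneg
    intro i _
    exact int_sextic_nonneg _ _ (hint i) (mul_self_nonneg (y i))
  -- combinatorial computation of the walk moments
  have hvne : ∀ {i j : Fin 7}, i ≠ j → v i ≠ v j := fun h => fun hc => h (hinj hc)
  have A01 : G.Adj (v 0) (v 1) := by
    rw [show (0 : Fin 7) = (0 : Fin 6).castSucc from by decide,
      show (1 : Fin 7) = (0 : Fin 6).succ from by decide]
    exact hadj 0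
  have A12 : G.Adj (v 1) (v 2) := by
    rw [show (1 : Fin 7) = (1 : Fin 6).castSucc from by decide,
      show (2 : Fin 7) = (1 : Fin 6).succ from by decide]
    exact hadj 1
  have A23 : G.Adj (v 2) (v 3) := by
    rw [show (2 : Fin 7) = (2 : Fin 6).castSucc from by decide,
      show (3 : Fin 7) = (2 : Fin 6).succ from by decide]
    exact hadj 2
  have A34 : G.Adj (v 3) (v 4) := by
    rw [show (3 : Fin 7) = (3 : Fin 6).castSucc from by decide,
      show (4 : Fin 7) = (3 : Fin 6).succ from by decide]
    exact hadj 3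
  have A45 : G.Adj (v 4) (v 5) := by
    rw [show (4 : Fin 7) = (4 : Fin 6).castSucc from by decide,
      show (5 : Fin 7) = (4 : Fin 6).succ from by decide]
    exact hadj 4
  have A56 : G.Adj (v 5) (v 6) := by
    rw [show (5 : Fin 7) = (5 : Fin 6).castSucc from by decide,
      show (6 : Fin 7) = (5 : Fin 6).succ from by decide]
    exact hadj 5
  -- neighbourhood of an internal vertex of degree 2
  have nbhd : ∀ (k : Fin 7) (a b : V), G.degree (v k) = 2 → G.Adj (v k) a → G.Adj (v k) b →
      a ≠ b → ∀ i : V, G.Adj i (v k) ↔ (i = a ∨ i = b) := by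
    intro k a b hdeg2 haj hbj hab i
    have hsub : ({a, b} : Finset V) ⊆ G.neighborFinset (v k) := by
      intro x hx
      rcases Finset.mem_insert.mp hx with h | h
      · subst h; exact (SimpleGraph.mem_neighborFinset _ _ _).mpr haj
      · rw [Finset.mem_singleton] at h; subst h
        exact (SimpleGraph.mem_neighborFinset _ _ _).mpr hbj
    have hcard : (G.neighborFinset (v k)).card ≤ ({a, b} : Finset V).card := by
      rw [Finset.card_pair hab, SimpleGraph.card_neighborFinset_eq_degree, hdeg2]
    have heq := Finset.eq_of_subset_of_card_le hsub hcard
    constructor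
    · intro h
      have hmem : i ∈ G.neighborFinset (v k) :=
        (SimpleGraph.mem_neighborFinset _ _ _).mpr h.symm
      rw [← heq] at hmem
      rcases Finset.mem_insert.mp hmem with h' | h'
      · exact Or.inl h'
      · exact Or.inr (Finset.mem_singleton.mp h')
    · rintro (rfl | rfl)
      · exact haj.symm
      · exact hbj.symm
  -- column of the adjacency matrix at an internal vertex
  have hcol : ∀ (k : Fin 7) (a b : V), (∀ i : V, G.Adj i (v k) ↔ (i = a ∨ i = b)) → a ≠ b →
      A *ᵥ Pi.single (v k) 1 = Pi.single a 1 + Pi.single b 1 := by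
    intro k a b hiff hab
    rw [Matrix.mulVec_single]
    funext i
    simp only [hAdef, SimpleGraph.adjMatrix_apply, Pi.add_apply, Pi.single_apply, mul_one]
    by_cases h1 : i = a
    · subst h1
      simp [hiff, hab]
    · by_cases h2 : i = b
      · subst h2
        simp [hiff, Ne.symm hab]
      · simp [hiff, h1, h2]
  have hd1 : G.degree (v 1) = 2 := hdeg 1 (by decide) (by decide)
  have hd2 : G.degree (v 2) = 2 := hdeg 2 (by decide) (by decide)
  have hd3 : G.degree (v 3) = 2 := hdeg 3 (by decide) (by decide)
  have hd4 : G.degree (v 4) = 2 := hdeg 4 (by decide) (by decide)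
  have hd5 : G.degree (v 5) = 2 := hdeg 5 (by decide) (by decide)
  have c1 : A *ᵥ Pi.single (v 1) 1 = Pi.single (v 0) 1 + Pi.single (v 2) 1 :=
    hcol 1 (v 0) (v 2) (nbhd 1 (v 0) (v 2) hd1 A01.symm A12 (hvne (by decide)))
      (hvne (by decide))
  have c2 : A *ᵥ Pi.single (v 2) 1 = Pi.single (v 1) 1 + Pi.single (v 3) 1 :=
    hcol 2 (v 1) (v 3) (nbhd 2 (v 1) (v 3) hd2 A12.symm A23 (hvne (by decide)))
      (hvne (by decide))
  have c3 : A *ᵥ Pi.single (v 3) 1 = Pi.single (v 2) 1 + Pi.single (v 4) 1 :=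
    hcol 3 (v 2) (v 4) (nbhd 3 (v 2) (v 4) hd3 A23.symm A34 (hvne (by decide)))
      (hvne (by decide))
  have c4 : A *ᵥ Pi.single (v 4) 1 = Pi.single (v 3) 1 + Pi.single (v 5) 1 :=
    hcol 4 (v 3) (v 5) (nbhd 4 (v 3) (v 5) hd4 A34.symm A45 (hvne (by decide)))
      (hvne (by decide))
  have c5 : A *ᵥ Pi.single (v 5) 1 = Pi.single (v 4) 1 + Pi.single (v 6) 1 :=
    hcol 5 (v 4) (v 6) (nbhd 5 (v 4) (v 6) hd5 A45.symm A56 (hvne (by decide)))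
      (hvne (by decide))
  -- the iterated images of e under A
  have p1 : A ^ 1 *ᵥ e = Pi.single (v 2) 1 + Pi.single (v 4) 1 := by
    rw [pow_one, hedef, c3]
  have p2 : A ^ 2 *ᵥ e = (Pi.single (v 1) 1 + Pi.single (v 3) 1)
      + (Pi.single (v 3) 1 + Pi.single (v 5) 1) := by
    rw [show (2 : ℕ) = 1 + 1 from rfl, pow_succ', ← Matrix.mulVec_mulVec, p1,
      Matrix.mulVec_add, c2, c4]
  have p3 : A ^ 3 *ᵥ e = ((Pi.single (v 0) 1 + Pi.single (v 2) 1)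
      + (Pi.single (v 2) 1 + Pi.single (v 4) 1))
      + ((Pi.single (v 2) 1 + Pi.single (v 4) 1)
      + (Pi.single (v 4) 1 + Pi.single (v 6) 1)) := by
    rw [show (3 : ℕ) = 2 + 1 from rfl, pow_succ', ← Matrix.mulVec_mulVec, p2,
      Matrix.mulVec_add, Matrix.mulVec_add, Matrix.mulVec_add, c1, c3, c5]
  -- symmetry: even moments are squares
  have hsym : ∀ k : ℕ, e ⬝ᵥ (A ^ (k + k) *ᵥ e) = (A ^ k *ᵥ e) ⬝ᵥ (A ^ k *ᵥ e) := by
    intro k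
    rw [pow_add, ← Matrix.mulVec_mulVec, Matrix.dotProduct_mulVec]
    congr 1
    rw [← Matrix.mulVec_transpose, Matrix.transpose_pow, hAdef,
      SimpleGraph.transpose_adjMatrix]
  have pe : A *ᵥ e = Pi.single (v 2) 1 + Pi.single (v 4) 1 := by
    rw [hedef]; exact c3
  have hq2 : e ⬝ᵥ (A ^ 2 *ᵥ e) = 2 := by
    have h := hsym 1
    norm_num at h
    rw [h, pe]
    simp [dotProduct_add, add_dotProduct, single_dotProduct,
      Pi.add_apply, Pi.single_apply, hinj.eq_iff]
    norm_num
  have hq4 : e ⬝ᵥ (A ^ 4 *ᵥ e) = 6 := by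
    have h := hsym 2
    norm_num at h
    rw [h, p2]
    simp [dotProduct_add, add_dotProduct, single_dotProduct,
      Pi.add_apply, Pi.single_apply, hinj.eq_iff]
    norm_num
  have hq6 : e ⬝ᵥ (A ^ 6 *ᵥ e) = 20 := by
    have h := hsym 3
    norm_num at h
    rw [h, p3]
    simp [dotProduct_add, add_dotProduct, single_dotProduct,
      Pi.add_apply, Pi.single_apply, hinj.eq_iff]
    norm_num
  rw [hq2, hq4, hq6] at hlow
  linarith
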